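/- Let f : X → Y be a continuous map between Hausdorff, second-countable, locally compact topological spaces. If X = X₁ ∪ X₂, then L(f) ⊆ L(f|X₁) ∪ L(f|X₂); moreover, if X₁ and X₂ are both closed in X, then L(f) = L(f|X₁) ∪ L(f|X₂). -/

import Mathlib

open Filter Topology Set

/-- The limit set `L(f)` of a map `f : X → Y`: the set of `y ∈ Y` for which there is a
sequence in `X` with no cluster points in `X` whose image under `f` converges to `y`. -/
def limitSet {X Y : Type*} [TopologicalSpace X] [TopologicalSpace Y] (f : X → Y) : Set Y :=
  {y | ∃ u : ℕ → X, (∀ p : X, ¬ MapClusterPt p Filter.atTop u) ∧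
    Filter.Tendsto (fun n => f (u n)) Filter.atTop (nhds y)}

private lemma mapClusterPt_subtype_of_val {X : Type*} [TopologicalSpace X] {S : Set X}
    (v : ℕ → S) (p : S) (h : MapClusterPt (p : X) Filter.atTop (fun n => (v n : X))) :
    MapClusterPt p Filter.atTop v := by
  rw [mapClusterPt_iff_frequently] at h ⊢
  intro s hs
  obtain ⟨t, ht, hts⟩ := (mem_nhds_subtype S p s).1 hs
  exact (h t ht).mono fun n hn => hts hn

/-- Membership in a single piece: if infinitely many terms of `u` lie in `S`,
then `y ∈ limitSet (S.restrict f)`. -/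
private lemma mem_limitSet_restrict {X Y : Type*} [TopologicalSpace X] [TopologicalSpace Y]
    (f : X → Y) {S : Set X} {u : ℕ → X} {y : Y}
    (hu : ∀ p : X, ¬ MapClusterPt p Filter.atTop u)
    (hy : Filter.Tendsto (fun n => f (u n)) Filter.atTop (nhds y))
    (hinf : {n | u n ∈ S}.Infinite) : y ∈ limitSet (S.restrict f) := by
  set q : ℕ → Prop := fun n => u n ∈ S with hq
  have hinf' : (setOf q).Infinite := hinf
  set φ : ℕ → ℕ := Nat.nth q with hφ
  have hmono : StrictMono φ := Nat.nth_strictMono hinf'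
  have hmem : ∀ n, u (φ n) ∈ S := fun n => Nat.nth_mem_of_infinite hinf' n
  refine ⟨fun n => ⟨u (φ n), hmem n⟩, ?_, ?_⟩
  · rintro ⟨p, hp⟩ hcl
    have : MapClusterPt p Filter.atTop (fun n => u (φ n)) :=
      hcl.continuousAt_comp (continuous_subtype_val.continuousAt)
    exact hu p (MapClusterPt.of_comp hmono.tendsto_atTop this)
  · exact hy.comp hmono.tendsto_atTop

/-- If `X = X₁ ∪ X₂` then `L(f) ⊆ L(f|X₁) ∪ L(f|X₂)`, with equality when both
`X₁` and `X₂` are closed. -/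
theorem limitSet_union
    {X Y : Type*} [TopologicalSpace X] [T2Space X] [SecondCountableTopology X]
    [LocallyCompactSpace X]
    [TopologicalSpace Y] [T2Space Y] [SecondCountableTopology Y] [LocallyCompactSpace Y]
    (f : X → Y) (hf : Continuous f) (X₁ X₂ : Set X) (hcover : X₁ ∪ X₂ = Set.univ) :
    limitSet f ⊆ limitSet (X₁.restrict f) ∪ limitSet (X₂.restrict f) ∧
      (IsClosed X₁ → IsClosed X₂ →
        limitSet f = limitSet (X₁.restrict f) ∪ limitSet (X₂.restrict f)) := by
  have hsub : limitSet f ⊆ limitSet (X₁.restrict f) ∪ limitSet (X₂.restrict f) := by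
    rintro y ⟨u, hu, hy⟩
    have hU : {n | u n ∈ X₁} ∪ {n | u n ∈ X₂} = Set.univ := by
      ext n
      simp only [Set.mem_union, Set.mem_setOf_eq, Set.mem_univ, iff_true]
      have : u n ∈ X₁ ∪ X₂ := hcover ▸ Set.mem_univ _
      exact this
    have : {n | u n ∈ X₁}.Infinite ∨ {n | u n ∈ X₂}.Infinite := by
      by_contra h
      push_neg at h
      have := (h.1).union (h.2)
      rw [hU] at this
      exact Set.infinite_univ this
    rcases this with h | h
    · exact Or.inl (mem_limitSet_restrict f hu hy h)
    · exact Or.inr (mem_limitSet_restrict f hu hy h)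
  refine ⟨hsub, fun h1 h2 => Set.Subset.antisymm hsub ?_⟩
  have key : ∀ S : Set X, IsClosed S → limitSet (S.restrict f) ⊆ limitSet f := by
    rintro S hS y ⟨v, hv, hy⟩
    refine ⟨fun n => (v n : X), fun p hp => ?_, hy⟩
    have hpS : p ∈ S := by
      have hcl : ClusterPt p (Filter.map (fun n => (v n : X)) Filter.atTop) := hp
      have hle : Filter.map (fun n => (v n : X)) Filter.atTop ≤ Filter.principal S := by
        rw [Filter.le_principal_iff]
        exact Filter.mem_map.2 (Filter.Eventually.of_forall fun n => (v n).2)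
      have : ClusterPt p (Filter.principal S) := hcl.mono hle
      exact hS.closure_eq ▸ mem_closure_iff_clusterPt.2 this
    exact hv ⟨p, hpS⟩ (mapClusterPt_subtype_of_val v ⟨p, hpS⟩ hp)
  exact Set.union_subset (key X₁ h1) (key X₂ h2)
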